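/- arXiv:1109.3367 — 4 statements merged into one kernel-verified Lean document; each statement's English description precedes it below -/
import Mathlib

section
/- Let G = (V, E) be a graph with V = {1,…,n}, let (y_e) and (z_e) pick the two endpoints of each edge e, let s = (n+4)³, R = R_{n+4}, X_∅ = (V − s − n) ∪ (R − s) ∪ (R + n) ∪ (V + s + n), and X_e = {z_e − n} ∪ R ∪ {y_e + s} for each e ∈ E. Then for every e ∈ E: (X_e − s) \ X_∅ = {y_e} and (X_e + n) \ X_∅ = {z_e}. -/
/-- `Rset m = {(i-1)·m² + i² : 1 ≤ i ≤ m}` as a finite set of integers. -/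
def Rset (m : ℕ) : Finset ℤ :=
  (Finset.Icc 1 m).image fun i : ℕ => ((i : ℤ) - 1) * (m : ℤ) ^ 2 + (i : ℤ) ^ 2

/-- The translate `S + t = {s + t : s ∈ S}`. -/
def shift (S : Finset ℤ) (t : ℤ) : Finset ℤ := S.image (· + t)

/-- The shift value `s = (n+4)³` of the vertex-cover reduction. -/
def sVal (n : ℕ) : ℤ := ((n : ℤ) + 4) ^ 3

/-- `X_∅ = (V - s - n) ∪ (R - s) ∪ (R + n) ∪ (V + s + n)` where `V = {1,…,n}`
and `R = R_{n+4}`. -/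
noncomputable def Xzero (n : ℕ) : Finset ℤ :=
  shift (Finset.Icc (1 : ℤ) (n : ℤ)) (-(sVal n + n)) ∪ shift (Rset (n + 4)) (-sVal n)
    ∪ shift (Rset (n + 4)) n ∪ shift (Finset.Icc (1 : ℤ) (n : ℤ)) (sVal n + n)

/-- `X_e = {z_e - n} ∪ R ∪ {y_e + s}` for an edge `e` with endpoints `y_e`, `z_e`. -/
def Xedge (n : ℕ) (ye ze : ℤ) : Finset ℤ :=
  {ze - (n : ℤ)} ∪ Rset (n + 4) ∪ {ye + sVal n}

/-- The reduction family `(X_a)_{a ∈ A}` with `A = {∅} ∪ E`, modelled on `Option E`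
(`none` plays the role of `∅`). -/
noncomputable def Xfam (n : ℕ) {E : Type*} (y z : E → ℤ) : Option E → Finset ℤ :=
  fun a => a.elim (Xzero n) fun e => Xedge n (y e) (z e)

lemma Rset_bounds {m : ℕ} {x : ℤ} (hx : x ∈ Rset m) : 1 ≤ x ∧ x ≤ (m : ℤ) ^ 3 := by
  simp only [Rset, Finset.mem_image, Finset.mem_Icc] at hx
  obtain ⟨i, ⟨h1, h2⟩, rfl⟩ := hx
  have h1' : (1 : ℤ) ≤ (i : ℤ) := by exact_mod_cast h1
  have h2' : (i : ℤ) ≤ (m : ℤ) := by exact_mod_cast h2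
  constructor
  · nlinarith [sq_nonneg (m : ℤ)]
  · nlinarith [sq_nonneg (m : ℤ), sq_nonneg ((m : ℤ) - i)]

lemma sVal_big (n : ℕ) : 2 * (n : ℤ) + 2 ≤ sVal n := by
  have : (0 : ℤ) ≤ (n : ℤ) := Int.natCast_nonneg n
  simp only [sVal]
  nlinarith [sq_nonneg ((n : ℤ) + 4)]

lemma not_mem_Xzero (n : ℕ) {v : ℤ} (h1 : 1 ≤ v) (h2 : v ≤ (n : ℤ)) : v ∉ Xzero n := by
  intro hv
  have hs := sVal_big n
  have hn0 : (0 : ℤ) ≤ (n : ℤ) := Int.natCast_nonneg n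
  simp only [Xzero, shift, Finset.mem_union, Finset.mem_image, Finset.mem_Icc] at hv
  rcases hv with ((⟨a, ⟨ha1, ha2⟩, ha⟩ | ⟨a, ha0, ha⟩) | ⟨a, ha0, ha⟩) | ⟨a, ⟨ha1, ha2⟩, ha⟩
  · omega
  · obtain ⟨hb1, hb2⟩ := Rset_bounds ha0
    have : ((n + 4 : ℕ) : ℤ) ^ 3 = sVal n := by simp [sVal]
    omega
  · obtain ⟨hb1, hb2⟩ := Rset_bounds ha0
    omega
  · omega

lemma shift_union (A B : Finset ℤ) (t : ℤ) :
    shift (A ∪ B) t = shift A t ∪ shift B t := Finset.image_union _ _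

lemma shift_singleton (a t : ℤ) : shift {a} t = {a + t} := Finset.image_singleton _ _

lemma mem_shift {S : Finset ℤ} {a : ℤ} (t : ℤ) (ha : a ∈ S) : a + t ∈ shift S t :=
  Finset.mem_image_of_mem _ ha

lemma shiftR_neg_subset (n : ℕ) : shift (Rset (n + 4)) (-sVal n) ⊆ Xzero n := by
  intro x hx
  simp only [Xzero, Finset.mem_union]
  tauto

lemma shiftR_n_subset (n : ℕ) : shift (Rset (n + 4)) (n : ℤ) ⊆ Xzero n := by
  intro x hx
  simp only [Xzero, Finset.mem_union]
  tauto

theorem stmt_14 (n : ℕ) (hn : 1 ≤ n) {E : Type*} (y z : E → ℤ)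
    (hy : ∀ e, y e ∈ Finset.Icc (1 : ℤ) (n : ℤ))
    (hz : ∀ e, z e ∈ Finset.Icc (1 : ℤ) (n : ℤ))
    (hyz : ∀ e, y e ≠ z e) (e : E) :
    shift (Xedge n (y e) (z e)) (-sVal n) \ Xzero n = {y e}
      ∧ shift (Xedge n (y e) (z e)) (n : ℤ) \ Xzero n = {z e} := by
  obtain ⟨hy1, hy2⟩ := Finset.mem_Icc.mp (hy e)
  obtain ⟨hz1, hz2⟩ := Finset.mem_Icc.mp (hz e)
  have hynot := not_mem_Xzero n hy1 hy2
  have hznot := not_mem_Xzero n hz1 hz2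
  constructor
  · ext x
    simp only [Xedge, shift_union, shift_singleton, Finset.mem_sdiff, Finset.mem_union,
      Finset.mem_singleton]
    constructor
    · rintro ⟨((rfl | hx) | rfl), hnot⟩
      · exfalso
        apply hnot
        have : z e - (n : ℤ) + -sVal n = z e + -(sVal n + n) := by ring
        rw [this]
        simp only [Xzero, Finset.mem_union]
        exact Or.inl (Or.inl (Or.inl (mem_shift _ (Finset.mem_Icc.mpr ⟨hz1, hz2⟩))))
      · exact absurd (shiftR_neg_subset n hx) hnot
      · ring
    · rintro rfl
      refine ⟨Or.inr (by ring), hynot⟩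
  · ext x
    simp only [Xedge, shift_union, shift_singleton, Finset.mem_sdiff, Finset.mem_union,
      Finset.mem_singleton]
    constructor
    · rintro ⟨((rfl | hx) | rfl), hnot⟩
      · ring
      · exact absurd (shiftR_n_subset n hx) hnot
      · exfalso
        apply hnot
        have : y e + sVal n + (n : ℤ) = y e + (sVal n + n) := by ring
        rw [this]
        simp only [Xzero, Finset.mem_union]
        exact Or.inr (mem_shift _ (Finset.mem_Icc.mpr ⟨hy1, hy2⟩))
    · rintro rfl
      refine ⟨Or.inl (Or.inl (by ring)), hznot⟩
end

section
/- With the notation of the vertex cover reduction (n ≥ 1, s = (n+4)³, R = R_{n+4}, X_∅ = (V − s − n) ∪ (R − s) ∪ (R + n) ∪ (V + s + n) where V = {1,…,n}): for every t ∈ ℤ, if |(R + t) \ X_∅| < n then t ∈ {−s, n}. -/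
section aux
variable {m : ℕ}

lemma mem_Rset {x : ℤ} :
    x ∈ Rset m ↔ ∃ a : ℤ, 1 ≤ a ∧ a ≤ (m : ℤ) ∧ x = (a - 1) * (m : ℤ) ^ 2 + a ^ 2 := by
  simp only [Rset, Finset.mem_image, Finset.mem_Icc]
  constructor
  · rintro ⟨i, ⟨h1, h2⟩, rfl⟩
    exact ⟨(i : ℤ), by exact_mod_cast h1, by exact_mod_cast h2, rfl⟩
  · rintro ⟨a, h1, h2, rfl⟩
    refine ⟨a.toNat, ⟨?_, ?_⟩, ?_⟩
    · omega
    · omega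
    · have : ((a.toNat : ℤ)) = a := by omega
      rw [this]

lemma mem_shift_s15 {S : Finset ℤ} {t x : ℤ} : x ∈ shift S t ↔ ∃ y ∈ S, y + t = x :=
  Finset.mem_image

lemma gap {a b : ℤ} (ha : 1 ≤ a) (hb : b ≤ (m : ℤ)) (hab : a < b) :
    (a - 1) * (m : ℤ) ^ 2 + a ^ 2 + ((m : ℤ) ^ 2 + 3) ≤ (b - 1) * (m : ℤ) ^ 2 + b ^ 2 := by
  nlinarith [sq_nonneg ((m : ℤ)), sq_nonneg (b - a - 1)]

lemma gap_abs {a b : ℤ} (ha : 1 ≤ a) (ha' : a ≤ (m : ℤ)) (hb : 1 ≤ b) (hb' : b ≤ (m : ℤ))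
    (hab : a ≠ b) :
    (m : ℤ) ^ 2 + 3 ≤ |((a - 1) * (m : ℤ) ^ 2 + a ^ 2) - ((b - 1) * (m : ℤ) ^ 2 + b ^ 2)| := by
  rcases lt_or_gt_of_ne hab with h | h
  · have := gap (m := m) ha hb' h
    rw [abs_sub_comm, abs_of_nonneg (by nlinarith [sq_nonneg ((m : ℤ))])]; linarith
  · have := gap (m := m) hb ha' h
    rw [abs_of_nonneg (by nlinarith [sq_nonneg ((m : ℤ))])]; linarith

lemma golomb {a b c d : ℤ} (ha : 1 ≤ a) (ha' : a ≤ (m : ℤ)) (hb : 1 ≤ b) (hb' : b ≤ (m : ℤ))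
    (hc : 1 ≤ c) (hc' : c ≤ (m : ℤ)) (hd : 1 ≤ d) (hd' : d ≤ (m : ℤ)) (hab : a ≠ b)
    (heq : ((a - 1) * (m : ℤ) ^ 2 + a ^ 2) - ((b - 1) * (m : ℤ) ^ 2 + b ^ 2)
         = ((c - 1) * (m : ℤ) ^ 2 + c ^ 2) - ((d - 1) * (m : ℤ) ^ 2 + d ^ 2)) :
    a = c ∧ b = d := by
  set M : ℤ := (m : ℤ) with hM
  have key : (a - b - (c - d)) * M ^ 2 = (c ^ 2 - d ^ 2) - (a ^ 2 - b ^ 2) := by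
    linear_combination heq
  have hub : a ^ 2 - b ^ 2 ≤ M ^ 2 - 1 := by nlinarith
  have hlb : -(M ^ 2 - 1) ≤ a ^ 2 - b ^ 2 := by nlinarith
  have hub' : c ^ 2 - d ^ 2 ≤ M ^ 2 - 1 := by nlinarith
  have hlb' : -(M ^ 2 - 1) ≤ c ^ 2 - d ^ 2 := by nlinarith
  have hMpos : (1 : ℤ) ≤ M ^ 2 := by nlinarith
  have htri : a - b - (c - d) = 0 ∨ a - b - (c - d) = 1 ∨ a - b - (c - d) = -1 := by
    by_contra hcon
    push_neg at hcon
    obtain ⟨h0, h1, h2⟩ := hcon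
    rcases le_or_gt 2 (a - b - (c - d)) with hh | hh
    · have h2M : 2 * M ^ 2 ≤ (a - b - (c - d)) * M ^ 2 :=
        mul_le_mul_of_nonneg_right hh (by positivity)
      linarith
    · have hh' : a - b - (c - d) ≤ -2 := by omega
      have h2M : (a - b - (c - d)) * M ^ 2 ≤ -2 * M ^ 2 :=
        mul_le_mul_of_nonneg_right hh' (by positivity)
      linarith
  rcases htri with h0 | h1 | h2
  · rw [h0, zero_mul] at key
    have huv : a - b = c - d := by linarith
    have hsq : a ^ 2 - b ^ 2 = c ^ 2 - d ^ 2 := by linarith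
    have hne : a - b ≠ 0 := by intro hz; apply hab; linarith
    have hfac : (a - b) * (a + b) = (a - b) * (c + d) := by
      linear_combination hsq - (c + d) * huv
    have hsum : a + b = c + d := mul_left_cancel₀ hne hfac
    constructor <;> linarith
  · exfalso
    rw [h1, one_mul] at key
    have hcdpos : 1 ≤ c ^ 2 - d ^ 2 := by linarith
    have habneg : a ^ 2 - b ^ 2 ≤ -1 := by linarith
    have h1' : d < c := by
      by_contra hle; push_neg at hle
      have := pow_le_pow_left₀ (by linarith : (0:ℤ) ≤ c) hle 2
      linarith
    have h2' : a < b := by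
      by_contra hle; push_neg at hle
      have := pow_le_pow_left₀ (by linarith : (0:ℤ) ≤ b) hle 2
      linarith
    omega
  · exfalso
    rw [h2] at key
    have habpos : 1 ≤ a ^ 2 - b ^ 2 := by linarith
    have hcdneg : c ^ 2 - d ^ 2 ≤ -1 := by linarith
    have h1' : b < a := by
      by_contra hle; push_neg at hle
      have := pow_le_pow_left₀ (by linarith : (0:ℤ) ≤ a) hle 2
      linarith
    have h2' : c < d := by
      by_contra hle; push_neg at hle
      have := pow_le_pow_left₀ (by linarith : (0:ℤ) ≤ d) hle 2
      linarith
    omega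

lemma card_Rset : (Rset m).card = m := by
  rw [Rset, Finset.card_image_of_injOn, Nat.card_Icc]
  · omega
  · intro i hi j hj hij
    simp only [Finset.coe_Icc, Set.mem_Icc] at hi hj
    by_contra hne
    have hne' : (i : ℤ) ≠ (j : ℤ) := by exact_mod_cast hne
    have hij' : ((i : ℤ) - 1) * (m : ℤ) ^ 2 + (i : ℤ) ^ 2
              = ((j : ℤ) - 1) * (m : ℤ) ^ 2 + (j : ℤ) ^ 2 := hij
    have := gap_abs (m := m) (a := (i : ℤ)) (b := (j : ℤ))
      (by exact_mod_cast hi.1) (by exact_mod_cast hi.2)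
      (by exact_mod_cast hj.1) (by exact_mod_cast hj.2) hne'
    rw [hij', sub_self, abs_zero] at this
    nlinarith [sq_nonneg ((m : ℤ))]

lemma card_shift {S : Finset ℤ} {t : ℤ} : (shift S t).card = S.card :=
  Finset.card_image_of_injective _ (add_left_injective t)

lemma shifts_eq {t t' : ℤ}
    (h : 2 ≤ (shift (Rset m) t ∩ shift (Rset m) t').card) : t = t' := by
  obtain ⟨x, hx, y, hy, hxy⟩ := Finset.one_lt_card.mp h
  simp only [Finset.mem_inter, mem_shift_s15, mem_Rset] at hx hy
  obtain ⟨⟨_, ⟨a, ha1, ha2, rfl⟩, hxa⟩, ⟨_, ⟨c, hc1, hc2, rfl⟩, hxc⟩⟩ := hx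
  obtain ⟨⟨_, ⟨b, hb1, hb2, rfl⟩, hyb⟩, ⟨_, ⟨d, hd1, hd2, rfl⟩, hyd⟩⟩ := hy
  have hab : a ≠ b := by rintro rfl; apply hxy; rw [← hxa, ← hyb]
  have heq : ((a - 1) * (m : ℤ) ^ 2 + a ^ 2) - ((b - 1) * (m : ℤ) ^ 2 + b ^ 2)
           = ((c - 1) * (m : ℤ) ^ 2 + c ^ 2) - ((d - 1) * (m : ℤ) ^ 2 + d ^ 2) := by
    have e1 := hxc.trans hxa.symm
    have e2 := hyd.trans hyb.symm
    linarith
  obtain ⟨rfl, -⟩ := golomb ha1 ha2 hb1 hb2 hc1 hc2 hd1 hd2 hab heq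
  linarith [hxc.trans hxa.symm]

lemma card_inter_interval_le {t c : ℤ} {k : ℕ} (hk : (k : ℤ) ≤ (m : ℤ) ^ 2 + 3) :
    (shift (Rset m) t ∩ shift (Finset.Icc (1 : ℤ) (k : ℤ)) c).card ≤ 1 := by
  rw [Finset.card_le_one]
  intro x hx y hy
  simp only [Finset.mem_inter, mem_shift_s15, mem_Rset, Finset.mem_Icc] at hx hy
  obtain ⟨⟨_, ⟨a, ha1, ha2, rfl⟩, hxa⟩, ⟨u, hu, hxu⟩⟩ := hx
  obtain ⟨⟨_, ⟨b, hb1, hb2, rfl⟩, hyb⟩, ⟨v, hv, hyv⟩⟩ := hy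
  by_contra hxy
  have hab : a ≠ b := by rintro rfl; apply hxy; rw [← hxa, ← hyb]
  have h1 := gap_abs (m := m) ha1 ha2 hb1 hb2 hab
  have h2 : |x - y| ≤ (k : ℤ) - 1 := by
    rw [abs_le]; omega
  have hxy' : x - y = ((a - 1) * (m : ℤ) ^ 2 + a ^ 2) - ((b - 1) * (m : ℤ) ^ 2 + b ^ 2) := by
    omega
  rw [← hxy'] at h1
  have := h1.trans h2
  linarith

end aux

theorem stmt_15 (n : ℕ) (hn : 1 ≤ n) (t : ℤ)
    (h : (shift (Rset (n + 4)) t \ Xzero n).card < n) :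
    t = -sVal n ∨ t = (n : ℤ) := by
  set m : ℕ := n + 4 with hm
  set S : Finset ℤ := shift (Rset m) t with hS
  have hScard : S.card = n + 4 := by rw [hS, card_shift, card_Rset]
  have hcards := Finset.card_inter_add_card_sdiff S (Xzero n)
  have h5 : 5 ≤ (S ∩ Xzero n).card := by omega
  set B1 := shift (Finset.Icc (1 : ℤ) (n : ℤ)) (-(sVal n + n)) with hB1
  set B2 := shift (Rset m) (-sVal n) with hB2
  set B3 := shift (Rset m) (n : ℤ) with hB3
  set B4 := shift (Finset.Icc (1 : ℤ) (n : ℤ)) (sVal n + n) with hB4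
  have hXzero : Xzero n = B1 ∪ B2 ∪ B3 ∪ B4 := rfl
  have hsplit : (S ∩ Xzero n).card
      ≤ (S ∩ B1).card + (S ∩ B2).card + (S ∩ B3).card + (S ∩ B4).card := by
    rw [hXzero]
    calc (S ∩ (B1 ∪ B2 ∪ B3 ∪ B4)).card
        = ((S ∩ B1 ∪ S ∩ B2) ∪ S ∩ B3 ∪ S ∩ B4).card := by
          rw [Finset.inter_union_distrib_left, Finset.inter_union_distrib_left,
            Finset.inter_union_distrib_left]
      _ ≤ (S ∩ B1 ∪ S ∩ B2 ∪ S ∩ B3).card + (S ∩ B4).card := Finset.card_union_le _ _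
      _ ≤ (S ∩ B1 ∪ S ∩ B2).card + (S ∩ B3).card + (S ∩ B4).card := by
          have := Finset.card_union_le (S ∩ B1 ∪ S ∩ B2) (S ∩ B3); omega
      _ ≤ (S ∩ B1).card + (S ∩ B2).card + (S ∩ B3).card + (S ∩ B4).card := by
          have := Finset.card_union_le (S ∩ B1) (S ∩ B2); omega
  have hk : (n : ℤ) ≤ (m : ℤ) ^ 2 + 3 := by push_cast [hm]; nlinarith [sq_nonneg ((n:ℤ))]
  have h1 : (S ∩ B1).card ≤ 1 := card_inter_interval_le hk
  have h4 : (S ∩ B4).card ≤ 1 := card_inter_interval_le hk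
  have h23 : 2 ≤ (S ∩ B2).card ∨ 2 ≤ (S ∩ B3).card := by omega
  rcases h23 with h2 | h3
  · exact Or.inl (shifts_eq h2)
  · exact Or.inr (shifts_eq h3)
end

section
/- Let G = (V, E) be a graph with V = {1,…,n}, and let (X_a)_{a∈A} with A = {∅} ∪ E be the reduction family: s = (n+4)³, R = R_{n+4}, X_∅ = (V−s−n) ∪ (R−s) ∪ (R+n) ∪ (V+s+n), X_e = {z_e − n} ∪ R ∪ {y_e + s}. If C is a vertex cover of G, then setting t_∅ = 0, t_e = −s when y_e ∈ C, and t_e = n otherwise, we have |⋃_{a∈A} (X_a + t_a)| ≤ |X_∅| + |C|. -/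
theorem stmt_17 (n : ℕ) (hn : 1 ≤ n) {E : Type*} [Fintype E] [DecidableEq E]
    (y z : E → ℤ)
    (hy : ∀ e, y e ∈ Finset.Icc (1 : ℤ) (n : ℤ))
    (hz : ∀ e, z e ∈ Finset.Icc (1 : ℤ) (n : ℤ))
    (hyz : ∀ e, y e ≠ z e)
    (C : Finset ℤ) (hCV : C ⊆ Finset.Icc (1 : ℤ) (n : ℤ))
    (hcov : ∀ e, y e ∈ C ∨ z e ∈ C) :
    (Finset.univ.biUnion fun a : Option E =>
        shift (Xfam n y z a)
          (a.elim 0 fun e => if y e ∈ C then -sVal n else (n : ℤ))).card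
      ≤ (Xzero n).card + C.card := by
  have hsub : (Finset.univ.biUnion fun a : Option E =>
      shift (Xfam n y z a)
        (a.elim 0 fun e => if y e ∈ C then -sVal n else (n : ℤ)))
      ⊆ Xzero n ∪ C := by
    intro x hx
    simp only [Finset.mem_biUnion, Finset.mem_univ, true_and] at hx
    obtain ⟨a, ha⟩ := hx
    match a with
    | none =>
      simp only [Xfam, Option.elim, shift, Finset.mem_image] at ha
      obtain ⟨b, hb, rfl⟩ := ha
      simpa using Finset.mem_union_left C hb
    | some e =>
      simp only [Xfam, Option.elim, shift, Xedge, Finset.mem_image, Finset.mem_union,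
        Finset.mem_singleton] at ha
      obtain ⟨b, hb, rfl⟩ := ha
      by_cases hyC : y e ∈ C
      · simp only [if_pos hyC]
        rcases hb with (rfl | hbR) | rfl
        · apply Finset.mem_union_left
          unfold Xzero
          apply Finset.mem_union_left
          apply Finset.mem_union_left
          apply Finset.mem_union_left
          simp only [shift, Finset.mem_image]
          exact ⟨z e, hz e, by ring⟩
        · apply Finset.mem_union_left
          unfold Xzero
          apply Finset.mem_union_left
          apply Finset.mem_union_left
          apply Finset.mem_union_right
          simp only [shift, Finset.mem_image]
          exact ⟨b, hbR, rfl⟩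
        · have h : y e + sVal n + -sVal n = y e := by ring
          rw [h]
          exact Finset.mem_union_right _ hyC
      · simp only [if_neg hyC]
        have hzC : z e ∈ C := (hcov e).resolve_left hyC
        rcases hb with (rfl | hbR) | rfl
        · have h : z e - (n : ℤ) + (n : ℤ) = z e := by ring
          rw [h]
          exact Finset.mem_union_right _ hzC
        · apply Finset.mem_union_left
          unfold Xzero
          apply Finset.mem_union_left
          apply Finset.mem_union_right
          simp only [shift, Finset.mem_image]
          exact ⟨b, hbR, rfl⟩
        · apply Finset.mem_union_left
          unfold Xzero
          apply Finset.mem_union_right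
          simp only [shift, Finset.mem_image]
          exact ⟨y e, hy e, by ring⟩
  exact (Finset.card_le_card hsub).trans (Finset.card_union_le _ _)
end

section
/- Let G = (V, E) be a graph with V = {1,…,n} and let (X_a)_{a∈A}, A = {∅} ∪ E, be the reduction family (s = (n+4)³, R = R_{n+4}, X_∅ = (V−s−n) ∪ (R−s) ∪ (R+n) ∪ (V+s+n), X_e = {z_e − n} ∪ R ∪ {y_e + s}). If (t_a)_{a∈A} ∈ ℤ^A satisfies t_∅ = 0 and |⋃_{a∈A} (X_a + t_a)| ≤ |X_∅| + k for some k < n, then C = ⋃_{e∈E} (X_e + t_e) \ X_∅ is a vertex cover of G of cardinality at most k. -/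
namespace VCAux
open Finset


open Finset

def f (m i : ℕ) : ℤ := ((i : ℤ) - 1) * (m : ℤ) ^ 2 + (i : ℤ) ^ 2

lemma shift_zero (S : Finset ℤ) : shift S 0 = S := by
  simp [shift]

lemma shift_card (S : Finset ℤ) (t : ℤ) : (shift S t).card = S.card :=
  Finset.card_image_of_injective _ (add_left_injective t)

lemma mem_shift {S : Finset ℤ} {t x : ℤ} : x ∈ shift S t ↔ ∃ s ∈ S, s + t = x := by
  simp only [shift, Finset.mem_image]

lemma shift_Icc (a b t : ℤ) : shift (Finset.Icc a b) t = Finset.Icc (a + t) (b + t) := by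
  ext x
  simp only [mem_shift, Finset.mem_Icc]
  constructor
  · rintro ⟨s, ⟨h1, h2⟩, rfl⟩; omega
  · intro h; exact ⟨x - t, ⟨by omega, by omega⟩, by omega⟩

lemma shift_union (A B : Finset ℤ) (t : ℤ) : shift (A ∪ B) t = shift A t ∪ shift B t :=
  Finset.image_union _ _

lemma shift_singleton (x t : ℤ) : shift {x} t = {x + t} := by simp [shift]

lemma shift_mono {A B : Finset ℤ} (h : A ⊆ B) (t : ℤ) : shift A t ⊆ shift B t :=
  Finset.image_subset_image h

lemma mem_Rset {m : ℕ} {x : ℤ} (hx : x ∈ Rset m) : 1 ≤ x ∧ x ≤ (m : ℤ) ^ 3 := by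
  simp only [Rset, Finset.mem_image, Finset.mem_Icc] at hx
  obtain ⟨i, ⟨h1, h2⟩, rfl⟩ := hx
  have h1' : (1 : ℤ) ≤ i := by exact_mod_cast h1
  have h2' : (i : ℤ) ≤ m := by exact_mod_cast h2
  constructor <;> nlinarith

lemma f_strictMono {m i j : ℕ} (hi1 : 1 ≤ i) (hjm : j ≤ m) (hij : i < j) :
    f m i + ((m : ℤ) ^ 2 + 3) ≤ f m j := by
  have h1 : (1 : ℤ) ≤ i := by exact_mod_cast hi1
  have h2 : (i : ℤ) + 1 ≤ j := by exact_mod_cast hij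
  have h3 : (j : ℤ) ≤ m := by exact_mod_cast hjm
  unfold f; nlinarith

lemma sq_sub_bounds {mz I J : ℤ} (hI1 : 1 ≤ I) (hI2 : I ≤ mz) (hJ1 : 1 ≤ J) (hJ2 : J ≤ mz) :
    -(mz ^ 2 - 1) ≤ I ^ 2 - J ^ 2 ∧ I ^ 2 - J ^ 2 ≤ mz ^ 2 - 1 := by
  constructor <;> nlinarith

lemma sq_sub_pos {I J : ℤ} (hJ : 1 ≤ J) (h : J + 1 ≤ I) : 3 ≤ I ^ 2 - J ^ 2 := by nlinarith

lemma f_def (m i : ℕ) : ((i : ℤ) - 1) * (m : ℤ) ^ 2 + (i : ℤ) ^ 2 = f m i := rfl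

lemma Rset_card (m : ℕ) : (Rset m).card = m := by
  rw [Rset, Finset.card_image_of_injOn, Nat.card_Icc]
  · omega
  · intro i hi j hj hij
    simp only [Finset.coe_Icc, Set.mem_Icc] at hi hj
    replace hij : f m i = f m j := hij
    by_contra hne
    rcases Nat.lt_or_ge i j with h | h
    · have h2 := f_strictMono hi.1 hj.2 h
      have : (0:ℤ) ≤ (m:ℤ)^2 := sq_nonneg _
      linarith [hij.le, hij.ge]
    · have hlt : j < i := by omega
      have h2 := f_strictMono hj.1 hi.2 hlt
      have : (0:ℤ) ≤ (m:ℤ)^2 := sq_nonneg _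
      linarith [hij.le, hij.ge]

/-- Distinct elements of `Rset m` differ by at least `m² + 3`. -/
lemma Rset_gap {m : ℕ} {x u : ℤ} (hx : x ∈ Rset m) (hu : u ∈ Rset m) (hxu : x ≠ u) :
    (m : ℤ) ^ 2 + 3 ≤ |x - u| := by
  simp only [Rset, Finset.mem_image, Finset.mem_Icc] at hx hu
  obtain ⟨i, ⟨hi1, hi2⟩, rfl⟩ := hx
  obtain ⟨j, ⟨hj1, hj2⟩, rfl⟩ := hu
  simp only [f_def] at hxu ⊢
  have hij : i ≠ j := by rintro rfl; exact hxu rfl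
  rcases Nat.lt_or_ge i j with h | h
  · have h2 := f_strictMono hi1 hj2 h
    rw [abs_sub_comm, abs_of_nonneg (by linarith [sq_nonneg (m:ℤ)])]
    linarith
  · have hlt : j < i := by omega
    have h2 := f_strictMono hj1 hi2 hlt
    rw [abs_of_nonneg (by linarith [sq_nonneg (m:ℤ)])]
    linarith

/-- A translate of `Rset m` meets an interval of length `< m²+3` in at most one point. -/
lemma card_shiftR_inter_Icc {m : ℕ} (τ a b : ℤ) (hlen : b - a < (m : ℤ) ^ 2 + 3) :
    (shift (Rset m) τ ∩ Finset.Icc a b).card ≤ 1 := by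
  apply Finset.card_le_one.2
  intro x hx u hu
  simp only [Finset.mem_inter, mem_shift, Finset.mem_Icc] at hx hu
  obtain ⟨⟨p, hp, rfl⟩, hxab⟩ := hx
  obtain ⟨⟨q, hq, rfl⟩, huab⟩ := hu
  by_contra hne
  have hpq : p ≠ q := by rintro rfl; exact hne rfl
  have hgap := Rset_gap hp hq hpq
  rcases abs_cases (p - q) with ⟨h1, _⟩ | ⟨h1, _⟩ <;> rw [h1] at hgap <;> linarith [hxab.1, hxab.2, huab.1, huab.2]

/-- Key difference-injectivity of `f`. -/
lemma f_diff_inj {m i j i' j' : ℕ} (hi1 : 1 ≤ i) (hi2 : i ≤ m) (hj1 : 1 ≤ j) (hj2 : j ≤ m)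
    (hi1' : 1 ≤ i') (hi2' : i' ≤ m) (hj1' : 1 ≤ j') (hj2' : j' ≤ m)
    (hij : i ≠ j) (h : f m i - f m j = f m i' - f m j') : i = i' ∧ j = j' := by
  have hI1 : (1 : ℤ) ≤ i := by exact_mod_cast hi1
  have hI2 : (i : ℤ) ≤ m := by exact_mod_cast hi2
  have hJ1 : (1 : ℤ) ≤ j := by exact_mod_cast hj1
  have hJ2 : (j : ℤ) ≤ m := by exact_mod_cast hj2
  have hI1' : (1 : ℤ) ≤ i' := by exact_mod_cast hi1'
  have hI2' : (i' : ℤ) ≤ m := by exact_mod_cast hi2'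
  have hJ1' : (1 : ℤ) ≤ j' := by exact_mod_cast hj1'
  have hJ2' : (j' : ℤ) ≤ m := by exact_mod_cast hj2'
  set M : ℤ := (m : ℤ) ^ 2 with hM
  set a : ℤ := (i : ℤ) - j with ha
  set b : ℤ := (i : ℤ) + j with hb
  set a' : ℤ := (i' : ℤ) - j' with ha'
  set b' : ℤ := (i' : ℤ) + j' with hb'
  have ha0 : a ≠ 0 := by omega
  have heq : a * (M + b) = a' * (M + b') := by
    have e1 : f m i - f m j = a * (M + b) := by
      simp only [f, ha, hb, hM]; ring
    have e2 : f m i' - f m j' = a' * (M + b') := by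
      simp only [f, ha', hb', hM]; ring
    rw [← e1, ← e2, h]
  have hab : a * b = (i : ℤ) ^ 2 - (j : ℤ) ^ 2 := by rw [ha, hb]; ring
  have hab' : a' * b' = (i' : ℤ) ^ 2 - (j' : ℤ) ^ 2 := by rw [ha', hb']; ring
  have hB := sq_sub_bounds hI1 hI2 hJ1 hJ2
  have hB' := sq_sub_bounds hI1' hI2' hJ1' hJ2'
  have habu : a * b ≤ M - 1 := by rw [hab, hM]; exact hB.2
  have habl : -(M - 1) ≤ a * b := by rw [hab, hM]; exact hB.1
  have habu' : a' * b' ≤ M - 1 := by rw [hab', hM]; exact hB'.2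
  have habl' : -(M - 1) ≤ a' * b' := by rw [hab', hM]; exact hB'.1
  have hm1 : (1 : ℤ) ≤ m := by omega
  have hMpos : (1 : ℤ) ≤ M := by
    rw [hM]
    calc (1 : ℤ) = 1 ^ 2 := (one_pow 2).symm
    _ ≤ (m : ℤ) ^ 2 := pow_le_pow_left₀ one_pos.le hm1 2
  have hbpos : 2 ≤ b := by omega
  have hbpos' : 2 ≤ b' := by omega
  have hposM : 0 < M + b := by linarith
  have hposM' : 0 < M + b' := by linarith
  have habsgn1 : 1 ≤ a → 3 ≤ a * b := by
    intro h1
    have hj : (j : ℤ) + 1 ≤ i := by omega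
    rw [hab]; exact sq_sub_pos hJ1 hj
  have habsgn2 : a ≤ -1 → a * b ≤ -3 := by
    intro h1
    have hj : (i : ℤ) + 1 ≤ j := by omega
    rw [hab]
    have := sq_sub_pos hI1 hj
    linarith
  have habsgn1' : 1 ≤ a' → 3 ≤ a' * b' := by
    intro h1
    have hj : (j' : ℤ) + 1 ≤ i' := by omega
    rw [hab']; exact sq_sub_pos hJ1' hj
  have habsgn2' : a' ≤ -1 → a' * b' ≤ -3 := by
    intro h1
    have hj : (i' : ℤ) + 1 ≤ j' := by omega
    rw [hab']
    have := sq_sub_pos hI1' hj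
    linarith
  have hdiff : (a - a') * M = a' * b' - a * b := by linear_combination heq
  have ha0' : a' ≠ 0 := by
    intro hc
    rw [hc, zero_mul] at heq
    rcases mul_eq_zero.1 heq with h0 | h0
    · exact ha0 h0
    · linarith
  have hd1 : a - a' ≤ 1 := by
    by_contra hc
    push_neg at hc
    have h2 : 2 ≤ a - a' := by omega
    have : 2 * M ≤ (a - a') * M := mul_le_mul_of_nonneg_right h2 (by linarith)
    linarith
  have hd2 : -1 ≤ a - a' := by
    by_contra hc
    push_neg at hc
    have h2 : a - a' ≤ -2 := by omega
    have : (a - a') * M ≤ -2 * M := mul_le_mul_of_nonneg_right h2 (by linarith)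
    linarith
  have hsame : (1 ≤ a ∧ 1 ≤ a') ∨ (a ≤ -1 ∧ a' ≤ -1) := by
    rcases lt_or_gt_of_ne ha0 with hneg | hpos
    · right
      refine ⟨by omega, ?_⟩
      by_contra hc
      push_neg at hc
      have h1 : (0 : ℤ) < a' := by omega
      have hp1 : 0 < a' * (M + b') := mul_pos h1 hposM'
      have hp2 : a * (M + b) < 0 := mul_neg_of_neg_of_pos hneg hposM
      linarith
    · left
      refine ⟨by omega, ?_⟩
      by_contra hc
      push_neg at hc
      have h1 : a' < 0 := by omega
      have hp1 : a' * (M + b') < 0 := mul_neg_of_neg_of_pos h1 hposM'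
      have hp2 : 0 < a * (M + b) := mul_pos hpos hposM
      linarith
  have haa : a = a' := by
    by_contra hne
    rcases (by omega : a - a' = 1 ∨ a - a' = -1) with hc | hc
    · rw [hc, one_mul] at hdiff
      rcases hsame with ⟨h1, h2⟩ | ⟨h1, h2⟩
      · have := habsgn1 h1; linarith
      · have := habsgn2' h2; linarith
    · rw [hc] at hdiff
      rcases hsame with ⟨h1, h2⟩ | ⟨h1, h2⟩
      · have := habsgn1' h2; linarith
      · have := habsgn2 h1; linarith
  have hbb : b = b' := by
    rw [← haa] at heq
    have h0 : a * (b - b') = 0 := by linear_combination heq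
    rcases mul_eq_zero.1 h0 with h1 | h1
    · exact absurd h1 ha0
    · linarith
  exact ⟨by omega, by omega⟩

/-- Two distinct translates of `Rset m` meet in at most one point. -/
lemma card_shiftR_inter_shiftR {m : ℕ} {τ τ' : ℤ} (h : τ ≠ τ') :
    (shift (Rset m) τ ∩ shift (Rset m) τ').card ≤ 1 := by
  apply Finset.card_le_one.2
  intro x hx u hu
  simp only [Finset.mem_inter, mem_shift] at hx hu
  obtain ⟨⟨p, hp, hp2⟩, ⟨q, hq, hq2⟩⟩ := hx
  obtain ⟨⟨p', hp', hp2'⟩, ⟨q', hq', hq2'⟩⟩ := hu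
  simp only [Rset, Finset.mem_image, Finset.mem_Icc] at hp hq hp' hq'
  obtain ⟨i, ⟨hi1, hi2⟩, rfl⟩ := hp
  obtain ⟨j, ⟨hj1, hj2⟩, rfl⟩ := hq
  obtain ⟨i', ⟨hi1', hi2'⟩, rfl⟩ := hp'
  obtain ⟨j', ⟨hj1', hj2'⟩, rfl⟩ := hq'
  simp only [f_def] at hp2 hq2 hp2' hq2' ⊢
  have hd : f m i - f m j = τ' - τ := by linarith
  have hd' : f m i' - f m j' = τ' - τ := by linarith
  have hij : i ≠ j := by
    rintro rfl
    apply h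
    have h0 : f m i - f m i = 0 := sub_self _
    linarith
  obtain ⟨h1, h2⟩ := f_diff_inj hi1 hi2 hj1 hj2 hi1' hi2' hj1' hj2' hij (by rw [hd, hd'])
  subst h1
  linarith

end VCAux

theorem stmt_18 (n : ℕ) (hn : 1 ≤ n) {E : Type*} [Fintype E] [DecidableEq E]
    (y z : E → ℤ)
    (hy : ∀ e, y e ∈ Finset.Icc (1 : ℤ) (n : ℤ))
    (hz : ∀ e, z e ∈ Finset.Icc (1 : ℤ) (n : ℤ))
    (hyz : ∀ e, y e ≠ z e)
    (t : Option E → ℤ) (ht0 : t none = 0) (k : ℕ) (hk : k < n)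
    (hcard : (Finset.univ.biUnion fun a : Option E => shift (Xfam n y z a) (t a)).card
      ≤ (Xzero n).card + k) :
    ((Finset.univ.biUnion fun e : E => shift (Xedge n (y e) (z e)) (t (some e)))
        \ Xzero n) ⊆ Finset.Icc (1 : ℤ) (n : ℤ)
      ∧ (∀ e : E,
          y e ∈ (Finset.univ.biUnion fun e : E => shift (Xedge n (y e) (z e)) (t (some e)))
              \ Xzero n
            ∨ z e ∈ (Finset.univ.biUnion fun e : E => shift (Xedge n (y e) (z e)) (t (some e)))
              \ Xzero n)
      ∧ ((Finset.univ.biUnion fun e : E => shift (Xedge n (y e) (z e)) (t (some e)))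
          \ Xzero n).card ≤ k := by
  classical
  have hn0 : (0:ℤ) ≤ (n:ℤ) := Int.natCast_nonneg n
  have hspos : 0 < sVal n := by
    have h4 : (0:ℤ) < (n:ℤ) + 4 := by linarith
    exact pow_pos h4 3
  have hRb : ∀ x ∈ Rset (n+4), 1 ≤ x ∧ x ≤ sVal n := by
    intro x hx
    have h := VCAux.mem_Rset hx
    have hc : ((n+4 : ℕ) : ℤ) ^ 3 = sVal n := by rw [sVal]; push_cast; ring
    exact ⟨h.1, by rw [← hc]; exact h.2⟩
  -- X₀ avoids the interval [1, n]
  have hX0mem : ∀ x ∈ Xzero n, ¬ (1 ≤ x ∧ x ≤ (n:ℤ)) := by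
    intro x hx
    simp only [Xzero, Finset.mem_union] at hx
    rcases hx with ((hx | hx) | hx) | hx
    · rw [VCAux.shift_Icc, Finset.mem_Icc] at hx
      rintro ⟨h1, h2⟩; linarith [hx.2]
    · rcases VCAux.mem_shift.1 hx with ⟨r, hr, rfl⟩
      have := hRb r hr
      rintro ⟨h1, h2⟩; linarith [this.2]
    · rcases VCAux.mem_shift.1 hx with ⟨r, hr, rfl⟩
      have := hRb r hr
      rintro ⟨h1, h2⟩; linarith [this.1]
    · rw [VCAux.shift_Icc, Finset.mem_Icc] at hx
      rintro ⟨h1, h2⟩; linarith [hx.1]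
  set U := (Finset.univ.biUnion fun a : Option E => shift (Xfam n y z a) (t a)) with hUdef
  have hX0sub : Xzero n ⊆ U := by
    intro x hx
    apply Finset.mem_biUnion.2
    refine ⟨none, Finset.mem_univ _, ?_⟩
    show x ∈ shift (Xfam n y z none) (t none)
    rw [show Xfam n y z none = Xzero n from rfl, ht0, VCAux.shift_zero]
    exact hx
  have hUdiff : (U \ Xzero n).card ≤ k := by
    rw [Finset.card_sdiff_of_subset hX0sub]
    omega
  have hSU : ∀ e : E, shift (Xedge n (y e) (z e)) (t (some e)) ⊆ U := by
    intro e
    have := Finset.subset_biUnion_of_mem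
      (fun a : Option E => shift (Xfam n y z a) (t a)) (Finset.mem_univ (some e))
    exact this
  have hRXe : ∀ e : E, shift (Rset (n+4)) (t (some e)) ⊆ shift (Xedge n (y e) (z e)) (t (some e)) := by
    intro e
    apply VCAux.shift_mono
    rw [Xedge]
    exact (Finset.subset_union_right.trans Finset.subset_union_left)
  -- membership helpers into Xzero
  have hmemA : ∀ x ∈ shift (Finset.Icc (1:ℤ) (n:ℤ)) (-(sVal n + n)), x ∈ Xzero n := by
    intro x hx
    rw [Xzero]
    exact Finset.mem_union_left _ (Finset.mem_union_left _ (Finset.mem_union_left _ hx))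
  have hmemB : ∀ x ∈ shift (Rset (n+4)) (-sVal n), x ∈ Xzero n := by
    intro x hx
    rw [Xzero]
    exact Finset.mem_union_left _ (Finset.mem_union_left _ (Finset.mem_union_right _ hx))
  have hmemC : ∀ x ∈ shift (Rset (n+4)) (n:ℤ), x ∈ Xzero n := by
    intro x hx
    rw [Xzero]
    exact Finset.mem_union_left _ (Finset.mem_union_right _ hx)
  have hmemD : ∀ x ∈ shift (Finset.Icc (1:ℤ) (n:ℤ)) (sVal n + n), x ∈ Xzero n := by
    intro x hx
    rw [Xzero]
    exact Finset.mem_union_right _ hx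
  -- the shifts must be n or -s
  have htval : ∀ e : E, t (some e) = (n:ℤ) ∨ t (some e) = -(sVal n) := by
    intro e
    by_contra hc
    push_neg at hc
    obtain ⟨h1, h2⟩ := hc
    set τ := t (some e) with hτ
    have hsubU : shift (Rset (n+4)) τ ⊆ U := (hRXe e).trans (hSU e)
    have h5 : (shift (Rset (n+4)) τ \ Xzero n).card ≤ k :=
      le_trans (Finset.card_le_card
        (Finset.sdiff_subset_sdiff hsubU (Finset.Subset.refl _))) hUdiff
    have hm2 : (n:ℤ) - 1 < ((n+4 : ℕ):ℤ)^2 + 3 := by push_cast; nlinarith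
    have hc1 : (shift (Rset (n+4)) τ ∩ shift (Finset.Icc (1:ℤ) (n:ℤ)) (-(sVal n + n))).card ≤ 1 := by
      rw [VCAux.shift_Icc]
      apply VCAux.card_shiftR_inter_Icc
      linarith
    have hc2 : (shift (Rset (n+4)) τ ∩ shift (Rset (n+4)) (-sVal n)).card ≤ 1 :=
      VCAux.card_shiftR_inter_shiftR h2
    have hc3 : (shift (Rset (n+4)) τ ∩ shift (Rset (n+4)) (n:ℤ)).card ≤ 1 :=
      VCAux.card_shiftR_inter_shiftR h1
    have hc4 : (shift (Rset (n+4)) τ ∩ shift (Finset.Icc (1:ℤ) (n:ℤ)) (sVal n + n)).card ≤ 1 := by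
      rw [VCAux.shift_Icc]
      apply VCAux.card_shiftR_inter_Icc
      linarith
    have h4 : (shift (Rset (n+4)) τ ∩ Xzero n).card ≤ 4 := by
      rw [Xzero, Finset.inter_union_distrib_left, Finset.inter_union_distrib_left,
        Finset.inter_union_distrib_left]
      calc _ ≤ _ + _ := Finset.card_union_le _ _
        _ ≤ (_ + _) + _ := by gcongr; exact Finset.card_union_le _ _
        _ ≤ ((_ + _) + _) + _ := by gcongr; exact Finset.card_union_le _ _
        _ ≤ ((1 + 1) + 1) + 1 := by gcongr
        _ = 4 := by norm_num
    have hcardR : (shift (Rset (n+4)) τ).card = n+4 := by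
      rw [VCAux.shift_card, VCAux.Rset_card]
    have hsplit := Finset.card_inter_add_card_sdiff (shift (Rset (n+4)) τ) (Xzero n)
    omega
  -- the per-edge difference sets
  have hdiffe : ∀ e : E,
      ((shift (Xedge n (y e) (z e)) (t (some e)) \ Xzero n ⊆ {z e}) ∧
        z e ∈ shift (Xedge n (y e) (z e)) (t (some e)) \ Xzero n) ∨
      ((shift (Xedge n (y e) (z e)) (t (some e)) \ Xzero n ⊆ {y e}) ∧
        y e ∈ shift (Xedge n (y e) (z e)) (t (some e)) \ Xzero n) := by
    intro e
    have hye := Finset.mem_Icc.1 (hy e)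
    have hze := Finset.mem_Icc.1 (hz e)
    rcases htval e with hτ | hτ
    · left
      constructor
      · intro x hx
        rw [Finset.mem_sdiff] at hx
        obtain ⟨hx1, hx2⟩ := hx
        rcases VCAux.mem_shift.1 hx1 with ⟨w, hw, rfl⟩
        rw [hτ] at *
        simp only [Xedge, Finset.mem_union, Finset.mem_singleton] at hw
        rcases hw with (hw | hw) | hw
        · subst hw
          simp only [Finset.mem_singleton]
          ring
        · exact absurd (hmemC _ (VCAux.mem_shift.2 ⟨w, hw, rfl⟩)) hx2
        · subst hw
          exfalso
          apply hx2
          apply hmemD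
          exact VCAux.mem_shift.2 ⟨y e, hy e, by ring⟩
      · rw [Finset.mem_sdiff]
        constructor
        · apply VCAux.mem_shift.2
          refine ⟨z e - (n:ℤ), ?_, by rw [hτ]; ring⟩
          simp [Xedge]
        · intro hzx
          exact hX0mem _ hzx ⟨hze.1, hze.2⟩
    · right
      constructor
      · intro x hx
        rw [Finset.mem_sdiff] at hx
        obtain ⟨hx1, hx2⟩ := hx
        rcases VCAux.mem_shift.1 hx1 with ⟨w, hw, rfl⟩
        rw [hτ] at *
        simp only [Xedge, Finset.mem_union, Finset.mem_singleton] at hw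
        rcases hw with (hw | hw) | hw
        · subst hw
          exfalso
          apply hx2
          apply hmemA
          exact VCAux.mem_shift.2 ⟨z e, hz e, by ring⟩
        · exact absurd (hmemB _ (VCAux.mem_shift.2 ⟨w, hw, rfl⟩)) hx2
        · subst hw
          simp only [Finset.mem_singleton]
          ring
      · rw [Finset.mem_sdiff]
        constructor
        · apply VCAux.mem_shift.2
          refine ⟨y e + sVal n, ?_, by rw [hτ]; ring⟩
          simp [Xedge]
        · intro hyx
          exact hX0mem _ hyx ⟨hye.1, hye.2⟩
  refine ⟨?_, ?_, ?_⟩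
  · intro x hx
    rw [Finset.mem_sdiff] at hx
    obtain ⟨hx1, hx2⟩ := hx
    obtain ⟨e, -, he⟩ := Finset.mem_biUnion.1 hx1
    have hxd : x ∈ shift (Xedge n (y e) (z e)) (t (some e)) \ Xzero n :=
      Finset.mem_sdiff.2 ⟨he, hx2⟩
    rcases hdiffe e with ⟨hsub, -⟩ | ⟨hsub, -⟩
    · have := Finset.mem_singleton.1 (hsub hxd)
      subst this
      exact hz e
    · have := Finset.mem_singleton.1 (hsub hxd)
      subst this
      exact hy e
  · intro e
    rcases hdiffe e with ⟨-, hmem⟩ | ⟨-, hmem⟩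
    · right
      rw [Finset.mem_sdiff] at hmem ⊢
      exact ⟨Finset.mem_biUnion.2 ⟨e, Finset.mem_univ _, hmem.1⟩, hmem.2⟩
    · left
      rw [Finset.mem_sdiff] at hmem ⊢
      exact ⟨Finset.mem_biUnion.2 ⟨e, Finset.mem_univ _, hmem.1⟩, hmem.2⟩
  · have hBU : (Finset.univ.biUnion fun e : E => shift (Xedge n (y e) (z e)) (t (some e))) ⊆ U := by
      intro x hx
      obtain ⟨e, -, he⟩ := Finset.mem_biUnion.1 hx
      exact hSU e he
    calc _ ≤ (U \ Xzero n).card :=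
          Finset.card_le_card (Finset.sdiff_subset_sdiff hBU (Finset.Subset.refl _))
      _ ≤ k := hUdiff
end
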